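/- Let G be a finite connected simple graph whose (unweighted) Laplacian Δ admits an eigenvector f : V(G) → ℝ with nonzero eigenvalue such that |f(x) − f(y)| = c for every pair of adjacent vertices x, y, where c is a constant. Then c ≠ 0 and G is bipartite: G contains no odd cycles, since around any cycle the increments f(u_i) − f(u_{i−1}) are each ±c and must sum to zero. -/

import Mathlib

open Matrix Finset
open scoped Classical

namespace ExtremalGraphs

variable {V : Type*} [Fintype V] [DecidableEq V] (G : SimpleGraph V) [DecidableRel G.Adj]

/-- The (unweighted) graph Laplacian acting on functions:
`(Δ g)(v) = ∑_{w ∼ v} (g(v) - g(w))`. -/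
noncomputable def lapApply {W : Type*} [Fintype W] (H : SimpleGraph W) (g : W → ℝ)
    (v : W) : ℝ :=
  ∑ w, if H.Adj v w then g v - g w else 0

/-- If the Laplacian of a finite connected simple graph `G` has an
eigenvector `f` with nonzero eigenvalue `μ` such that `|f(x) - f(y)| = c` for all
adjacent `x`, `y`, then `c ≠ 0` and `G` is bipartite (`2`-colorable); in particular `G`
has no odd cycles. -/
theorem const_gradient_eigenvector_bipartite (hG : G.Connected) (f : V → ℝ) (μ c : ℝ)
    (hf : f ≠ 0) (hμ : μ ≠ 0) (heig : ∀ v, lapApply G f v = μ * f v)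
    (hgrad : ∀ v w : V, G.Adj v w → |f v - f w| = c) :
    c ≠ 0 ∧ G.Colorable 2 ∧ ∀ (v : V) (p : G.Walk v v), p.IsCycle → ¬ Odd p.length := by
  obtain ⟨v₀, hv₀⟩ : ∃ v, f v ≠ 0 := by
    by_contra h; push_neg at h; exact hf (funext h)
  have hlap : lapApply G f v₀ ≠ 0 := by rw [heig]; exact mul_ne_zero hμ hv₀
  obtain ⟨w₀, hw₀⟩ : ∃ w, G.Adj v₀ w := by
    by_contra h; push_neg at h
    exact hlap (Finset.sum_eq_zero fun w _ => by simp [h w])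
  have hc0 : 0 ≤ c := hgrad v₀ w₀ hw₀ ▸ abs_nonneg _
  -- key parity lemma along walks
  have key : ∀ {u v : V} (p : G.Walk u v),
      ∃ k : ℤ, f u - f v = k * c ∧ (Even k ↔ Even p.length) := by
    intro u v p
    induction p with
    | nil => exact ⟨0, by simp⟩
    | @cons u x v h p ih =>
      obtain ⟨k, hk, hpar⟩ := ih
      rcases (abs_eq hc0).mp (hgrad _ _ h) with he | he
      · refine ⟨k + 1, by push_cast; linarith, ?_⟩
        simp only [SimpleGraph.Walk.length_cons, Int.even_add_one, Nat.even_add_one]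
        exact not_congr hpar
      · refine ⟨k - 1, by push_cast; linarith, ?_⟩
        simp only [SimpleGraph.Walk.length_cons, Int.even_sub_one, Nat.even_add_one]
        exact not_congr hpar
  have hcne : c ≠ 0 := by
    intro hc
    subst hc
    have hconst : ∀ v, f v = f v₀ := by
      intro v
      obtain ⟨k, hk, -⟩ := key ((hG.preconnected v₀ v).some)
      linarith [hk]
    apply hlap
    refine Finset.sum_eq_zero fun w _ => ?_
    by_cases hadj : G.Adj v₀ w
    · simp [hadj, hconst w, hconst v₀]
    · simp [hadj]
  refine ⟨hcne, ?_, ?_⟩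
  · -- 2-colorable
    refine ⟨SimpleGraph.Coloring.mk
      (fun v => if ∃ k : ℤ, f v₀ - f v = 2 * k * c then 0 else 1) ?_⟩
    intro v w hvw heq
    have hpm : f v - f w = c ∨ f v - f w = -c := (abs_eq hc0).mp (hgrad _ _ hvw)
    by_cases hv : ∃ k : ℤ, f v₀ - f v = 2 * k * c
    · have hw : ∃ k : ℤ, f v₀ - f w = 2 * k * c := by
        by_contra hw
        simp only [hv, hw, if_true, if_false] at heq
        exact absurd heq (by decide)
      obtain ⟨k, hk⟩ := hv
      obtain ⟨m, hm⟩ := hw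
      have : (2 * (m - k) : ℝ) * c = f v - f w := by push_cast; linarith
      rcases hpm with he | he <;> rw [he] at this
      · have h1 : ((2 * (m - k) : ℤ) : ℝ) = 1 := by
          push_cast
          field_simp at this ⊢
          exact mul_right_cancel₀ hcne (by linarith)
        have : (2 * (m - k) : ℤ) = 1 := by exact_mod_cast h1
        omega
      · have h1 : ((2 * (m - k) : ℤ) : ℝ) = -1 := by
          push_cast
          exact mul_right_cancel₀ hcne (by linarith)
        have : (2 * (m - k) : ℤ) = -1 := by exact_mod_cast h1
        omega
    · have hw : ¬ ∃ k : ℤ, f v₀ - f w = 2 * k * c := by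
        by_contra hw
        simp only [hv, hw, if_true, if_false] at heq
        exact absurd heq (by decide)
      obtain ⟨a, ha, -⟩ := key ((hG.preconnected v₀ v).some)
      obtain ⟨b, hb, -⟩ := key ((hG.preconnected v₀ w).some)
      have hao : Odd a := by
        rcases Int.even_or_odd a with he | ho
        · obtain ⟨t, ht⟩ := he
          exact absurd ⟨t, by rw [ha]; push_cast [ht]; ring⟩ hv
        · exact ho
      have hbo : Odd b := by
        rcases Int.even_or_odd b with he | ho
        · obtain ⟨t, ht⟩ := he
          exact absurd ⟨t, by rw [hb]; push_cast [ht]; ring⟩ hw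
        · exact ho
      have hdiff : ((b - a : ℤ) : ℝ) * c = f v - f w := by push_cast; linarith
      rcases hpm with he | he <;> rw [he] at hdiff
      · have : ((b - a : ℤ) : ℝ) = 1 := mul_right_cancel₀ hcne (by linarith)
        have hba : b - a = 1 := by exact_mod_cast this
        obtain ⟨s, hs⟩ := hao; obtain ⟨t, ht⟩ := hbo; omega
      · have : ((b - a : ℤ) : ℝ) = -1 := mul_right_cancel₀ hcne (by linarith)
        have hba : b - a = -1 := by exact_mod_cast this
        obtain ⟨s, hs⟩ := hao; obtain ⟨t, ht⟩ := hbo; omega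
  · -- no odd cycles
    intro v p hp hodd
    obtain ⟨k, hk, hpar⟩ := key p
    have hk0 : k = 0 := by
      have : (k : ℝ) * c = 0 := by linarith
      exact_mod_cast (mul_eq_zero.mp this).resolve_right hcne
    rw [← Nat.not_even_iff_odd] at hodd
    exact hodd (hpar.mp (hk0 ▸ Even.zero))

end ExtremalGraphs
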